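/- The kernel of phi : G_V -> S_5 is the normal closure in G_V of the two elements (g3 g1 g2 g1)^2 and (g3' g1 g2 g1)^2. -/
import Mathlib

namespace Stmt2aux

variable {G : Type*} [Group G]

def NF1 (t1 : G) : Set G := {1, t1}
def NF2 (t1 t2 : G) : Set G :=
  {x | ∃ w ∈ ({1, t2, t1*t2} : Set G), ∃ z ∈ NF1 t1, x = w * z}
def NF3 (t1 t2 t3 : G) : Set G :=
  {x | ∃ v ∈ ({1, t3, t2*t3, t1*(t2*t3)} : Set G), ∃ y ∈ NF2 t1 t2, x = v * y}
def NF4 (t1 t2 t3 t4 : G) : Set G :=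
  {x | ∃ u ∈ ({1, t4, t3*t4, t2*(t3*t4), t1*(t2*(t3*t4))} : Set G),
      ∃ y ∈ NF3 t1 t2 t3, x = u * y}

section
variable {t1 t2 t3 t4 : G}

lemma nf1_one : (1 : G) ∈ NF1 t1 := Or.inl rfl

lemma nf1_mul (q1 : ∀ x : G, t1*(t1*x) = x) : ∀ x ∈ NF1 t1, t1 * x ∈ NF1 (t1 : G) := by
  rintro x hx
  rcases hx with h | h <;> rw [h]
  · exact Or.inr (by simp [NF1])
  · exact Or.inl (by simpa using q1 1)

lemma nf2_one : (1 : G) ∈ NF2 t1 t2 := ⟨1, by simp, 1, nf1_one, by simp⟩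

lemma nf2_mul1 (q1 : ∀ x : G, t1*(t1*x) = x) : ∀ x ∈ NF2 t1 t2, t1 * x ∈ NF2 t1 t2 := by
  rintro x ⟨w, hw, z, hz, rfl⟩
  simp only [Set.mem_insert_iff, Set.mem_singleton_iff] at hw
  rcases hw with h | h | h <;> rw [h]
  · exact ⟨1, by simp, t1*z, nf1_mul q1 z hz, by simp⟩
  · exact ⟨t1*t2, by simp, z, hz, by simp only [mul_assoc]⟩
  · exact ⟨t2, by simp, z, hz, by simp only [mul_assoc, q1]⟩

lemma nf2_mul2 (q1 : ∀ x : G, t1*(t1*x) = x) (q2 : ∀ x : G, t2*(t2*x) = x) (b12 : ∀ x : G, t1*(t2*(t1*x)) = t2*(t1*(t2*x))) : ∀ x ∈ NF2 t1 t2, t2 * x ∈ NF2 t1 t2 := by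
  rintro x ⟨w, hw, z, hz, rfl⟩
  simp only [Set.mem_insert_iff, Set.mem_singleton_iff] at hw
  rcases hw with h | h | h <;> rw [h]
  · exact ⟨t2, by simp, z, hz, by simp⟩
  · exact ⟨1, by simp, z, hz, by simp only [mul_assoc, q2, one_mul]⟩
  · exact ⟨t1*t2, by simp, t1*z, nf1_mul q1 z hz, by
      simp only [mul_assoc]; rw [b12]⟩

lemma nf3_one : (1 : G) ∈ NF3 t1 t2 t3 := ⟨1, by simp, 1, nf2_one, by simp⟩

lemma nf3_mul1 (q1 : ∀ x : G, t1*(t1*x) = x) (c13 : ∀ x : G, t1*(t3*x) = t3*(t1*x)) : ∀ x ∈ NF3 t1 t2 t3, t1 * x ∈ NF3 t1 t2 t3 := by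
  rintro x ⟨v, hv, y, hy, rfl⟩
  simp only [Set.mem_insert_iff, Set.mem_singleton_iff] at hv
  rcases hv with h | h | h | h <;> rw [h]
  · exact ⟨1, by simp, t1*y, nf2_mul1 q1 y hy, by simp⟩
  · exact ⟨t3, by simp, t1*y, nf2_mul1 q1 y hy, by simp only [mul_assoc, c13]⟩
  · exact ⟨t1*(t2*t3), by simp, y, hy, by simp only [mul_assoc]⟩
  · exact ⟨t2*t3, by simp, y, hy, by simp only [mul_assoc, q1]⟩

lemma nf3_mul2 (q1 : ∀ x : G, t1*(t1*x) = x) (q2 : ∀ x : G, t2*(t2*x) = x) (b12 : ∀ x : G, t1*(t2*(t1*x)) = t2*(t1*(t2*x))) (c13 : ∀ x : G, t1*(t3*x) = t3*(t1*x)) : ∀ x ∈ NF3 t1 t2 t3, t2 * x ∈ NF3 t1 t2 t3 := by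
  rintro x ⟨v, hv, y, hy, rfl⟩
  simp only [Set.mem_insert_iff, Set.mem_singleton_iff] at hv
  rcases hv with h | h | h | h <;> rw [h]
  · exact ⟨1, by simp, t2*y, nf2_mul2 q1 q2 b12 y hy, by simp⟩
  · exact ⟨t2*t3, by simp, y, hy, by simp only [mul_assoc]⟩
  · exact ⟨t3, by simp, y, hy, by simp only [mul_assoc, q2]⟩
  · exact ⟨t1*(t2*t3), by simp, t1*y, nf2_mul1 q1 y hy, by
      simp only [mul_assoc]; rw [← b12, c13]⟩

lemma nf3_mul3 (q1 : ∀ x : G, t1*(t1*x) = x) (q2 : ∀ x : G, t2*(t2*x) = x) (q3 : ∀ x : G, t3*(t3*x) = x) (b12 : ∀ x : G, t1*(t2*(t1*x)) = t2*(t1*(t2*x))) (b23 : ∀ x : G, t2*(t3*(t2*x)) = t3*(t2*(t3*x))) (c13 : ∀ x : G, t1*(t3*x) = t3*(t1*x)) : ∀ x ∈ NF3 t1 t2 t3, t3 * x ∈ NF3 t1 t2 t3 := by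
  rintro x ⟨v, hv, y, hy, rfl⟩
  simp only [Set.mem_insert_iff, Set.mem_singleton_iff] at hv
  rcases hv with h | h | h | h <;> rw [h]
  · exact ⟨t3, by simp, y, hy, by simp⟩
  · exact ⟨1, by simp, y, hy, by simp only [mul_assoc, q3, one_mul]⟩
  · exact ⟨t2*t3, by simp, t2*y, nf2_mul2 q1 q2 b12 y hy, by
      simp only [mul_assoc]; rw [← b23]⟩
  · exact ⟨t1*(t2*t3), by simp, t2*y, nf2_mul2 q1 q2 b12 y hy, by
      simp only [mul_assoc]; rw [← c13, ← b23]⟩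

lemma nf4_one : (1 : G) ∈ NF4 t1 t2 t3 t4 := ⟨1, by simp, 1, nf3_one, by simp⟩

lemma nf4_mul1 (q1 : ∀ x : G, t1*(t1*x) = x) (c13 : ∀ x : G, t1*(t3*x) = t3*(t1*x)) (c14 : ∀ x : G, t1*(t4*x) = t4*(t1*x)) : ∀ x ∈ NF4 t1 t2 t3 t4, t1 * x ∈ NF4 t1 t2 t3 t4 := by
  rintro x ⟨u, hu, y, hy, rfl⟩
  simp only [Set.mem_insert_iff, Set.mem_singleton_iff] at hu
  rcases hu with h | h | h | h | h <;> rw [h]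
  · exact ⟨1, by simp, t1*y, nf3_mul1 q1 c13 y hy, by simp⟩
  · exact ⟨t4, by simp, t1*y, nf3_mul1 q1 c13 y hy, by simp only [mul_assoc, c14]⟩
  · exact ⟨t3*t4, by simp, t1*y, nf3_mul1 q1 c13 y hy, by
      simp only [mul_assoc, c13, c14]⟩
  · exact ⟨t1*(t2*(t3*t4)), by simp, y, hy, by simp only [mul_assoc]⟩
  · exact ⟨t2*(t3*t4), by simp, y, hy, by simp only [mul_assoc, q1]⟩

lemma nf4_mul2 (q1 : ∀ x : G, t1*(t1*x) = x) (q2 : ∀ x : G, t2*(t2*x) = x) (b12 : ∀ x : G, t1*(t2*(t1*x)) = t2*(t1*(t2*x))) (c13 : ∀ x : G, t1*(t3*x) = t3*(t1*x)) (c14 : ∀ x : G, t1*(t4*x) = t4*(t1*x)) (c24 : ∀ x : G, t2*(t4*x) = t4*(t2*x)) : ∀ x ∈ NF4 t1 t2 t3 t4, t2 * x ∈ NF4 t1 t2 t3 t4 := by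
  rintro x ⟨u, hu, y, hy, rfl⟩
  simp only [Set.mem_insert_iff, Set.mem_singleton_iff] at hu
  rcases hu with h | h | h | h | h <;> rw [h]
  · exact ⟨1, by simp, t2*y, nf3_mul2 q1 q2 b12 c13 y hy, by simp⟩
  · exact ⟨t4, by simp, t2*y, nf3_mul2 q1 q2 b12 c13 y hy, by
      simp only [mul_assoc, c24]⟩
  · exact ⟨t2*(t3*t4), by simp, y, hy, by simp only [mul_assoc]⟩
  · exact ⟨t3*t4, by simp, y, hy, by simp only [mul_assoc, q2]⟩
  · exact ⟨t1*(t2*(t3*t4)), by simp, t1*y, nf3_mul1 q1 c13 y hy, by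
      simp only [mul_assoc]; rw [← b12, c13, c14]⟩

lemma nf4_mul3 (q1 : ∀ x : G, t1*(t1*x) = x) (q2 : ∀ x : G, t2*(t2*x) = x) (q3 : ∀ x : G, t3*(t3*x) = x) (b12 : ∀ x : G, t1*(t2*(t1*x)) = t2*(t1*(t2*x))) (b23 : ∀ x : G, t2*(t3*(t2*x)) = t3*(t2*(t3*x))) (c13 : ∀ x : G, t1*(t3*x) = t3*(t1*x)) (c14 : ∀ x : G, t1*(t4*x) = t4*(t1*x)) (c24 : ∀ x : G, t2*(t4*x) = t4*(t2*x)) : ∀ x ∈ NF4 t1 t2 t3 t4, t3 * x ∈ NF4 t1 t2 t3 t4 := by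
  rintro x ⟨u, hu, y, hy, rfl⟩
  simp only [Set.mem_insert_iff, Set.mem_singleton_iff] at hu
  rcases hu with h | h | h | h | h <;> rw [h]
  · exact ⟨1, by simp, t3*y, nf3_mul3 q1 q2 q3 b12 b23 c13 y hy, by simp⟩
  · exact ⟨t3*t4, by simp, y, hy, by simp only [mul_assoc]⟩
  · exact ⟨t4, by simp, y, hy, by simp only [mul_assoc, q3]⟩
  · exact ⟨t2*(t3*t4), by simp, t2*y, nf3_mul2 q1 q2 b12 c13 y hy, by
      simp only [mul_assoc]; rw [← b23, c24]⟩
  · exact ⟨t1*(t2*(t3*t4)), by simp, t2*y, nf3_mul2 q1 q2 b12 c13 y hy, by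
      simp only [mul_assoc]; rw [← c13, ← b23, c24]⟩

lemma nf4_mul4 (q1 : ∀ x : G, t1*(t1*x) = x) (q2 : ∀ x : G, t2*(t2*x) = x) (q3 : ∀ x : G, t3*(t3*x) = x) (q4 : ∀ x : G, t4*(t4*x) = x) (b12 : ∀ x : G, t1*(t2*(t1*x)) = t2*(t1*(t2*x))) (b23 : ∀ x : G, t2*(t3*(t2*x)) = t3*(t2*(t3*x))) (b34 : ∀ x : G, t3*(t4*(t3*x)) = t4*(t3*(t4*x))) (c13 : ∀ x : G, t1*(t3*x) = t3*(t1*x)) (c14 : ∀ x : G, t1*(t4*x) = t4*(t1*x)) (c24 : ∀ x : G, t2*(t4*x) = t4*(t2*x)) : ∀ x ∈ NF4 t1 t2 t3 t4, t4 * x ∈ NF4 t1 t2 t3 t4 := by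
  rintro x ⟨u, hu, y, hy, rfl⟩
  simp only [Set.mem_insert_iff, Set.mem_singleton_iff] at hu
  rcases hu with h | h | h | h | h <;> rw [h]
  · exact ⟨t4, by simp, y, hy, by simp⟩
  · exact ⟨1, by simp, y, hy, by simp only [mul_assoc, q4, one_mul]⟩
  · exact ⟨t3*t4, by simp, t3*y, nf3_mul3 q1 q2 q3 b12 b23 c13 y hy, by
      simp only [mul_assoc]; rw [b34]⟩
  · exact ⟨t2*(t3*t4), by simp, t3*y, nf3_mul3 q1 q2 q3 b12 b23 c13 y hy, by
      simp only [mul_assoc]; rw [← c24, ← b34]⟩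
  · exact ⟨t1*(t2*(t3*t4)), by simp, t3*y, nf3_mul3 q1 q2 q3 b12 b23 c13 y hy, by
      simp only [mul_assoc]; rw [← c14, ← c24, ← b34]⟩

end

lemma key {Q : Type*} [Group Q] (ψ : Q →* Equiv.Perm (Fin 5)) (a b c d f : Q)
    (qa : a*a = 1) (qb : b*b = 1) (qc : c*c = 1) (qd : d*d = 1) (qf : f*f = 1)
    (hab : a*b*a = b*a*b)
    (hbd : b*d*b = d*b*d)
    (hfd : f*d*f = d*f*d)
    (hfX : f*(d*c*d)*f = d*c*d*f*(d*c*d))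
    (hcf : d*c*f = f*(d*c))
    (haf : a*f = f*a) (hbf : b*f = f*b)
    (hr1 : (c*a*b*a)*(c*a*b*a) = 1)
    (pa : ψ a = Equiv.swap 0 2) (pb : ψ b = Equiv.swap 1 2)
    (pc : ψ c = Equiv.swap 2 3) (pf : ψ f = Equiv.swap 3 4)
    (gen : ∀ x : Q, x ∈ Subgroup.closure ({a, b, c, d, f} : Set Q)) :
    ∀ x : Q, ψ x = 1 → x = 1 := by
  have ainv : a⁻¹ = a := inv_eq_of_mul_eq_one_right qa
  have binv : b⁻¹ = b := inv_eq_of_mul_eq_one_right qb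
  have cinv : c⁻¹ = c := inv_eq_of_mul_eq_one_right qc
  have dinv : d⁻¹ = d := inv_eq_of_mul_eq_one_right qd
  have finv : f⁻¹ = f := inv_eq_of_mul_eq_one_right qf
  have ta : ∀ x : Q, a*(a*x) = x := fun x => by rw [← mul_assoc, qa, one_mul]
  have tb : ∀ x : Q, b*(b*x) = x := fun x => by rw [← mul_assoc, qb, one_mul]
  have tc : ∀ x : Q, c*(c*x) = x := fun x => by rw [← mul_assoc, qc, one_mul]
  have tf : ∀ x : Q, f*(f*x) = x := fun x => by rw [← mul_assoc, qf, one_mul]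
  -- c = d
  have e1 : f*(d*c*d)*f = d*c*(d*f*d) := by
    calc f*(d*c*d)*f = f*(d*c)*(d*f) := by group
      _ = (d*c*f)*(d*f) := by rw [← hcf]
      _ = d*c*(f*d*f) := by group
      _ = d*c*(d*f*d) := by rw [hfd]
  have e3 : (d*c*d*f)*(d*c*d) = (d*c*d*f)*d := by
    calc (d*c*d*f)*(d*c*d) = d*c*d*f*(d*c*d) := by group
      _ = f*(d*c*d)*f := by rw [hfX]
      _ = d*c*(d*f*d) := e1
      _ = (d*c*d*f)*d := by group
  have e4 : d*c*d = d := mul_left_cancel e3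
  have e6 : c*d = 1 := by
    have e5 : d*(c*d) = d*1 := by
      rw [mul_one]
      calc d*(c*d) = d*c*d := by group
        _ = d := e4
    exact mul_left_cancel e5
  have hcd : c = d := by
    have h := inv_eq_of_mul_eq_one_left e6
    rw [dinv] at h
    exact h.symm
  have hbc : b*c*b = c*b*c := by rw [hcd]; exact hbd
  have hfc : f*c*f = c*f*c := by rw [hcd]; exact hfd
  have hcomm : c*a*b*a = a*b*a*c := by
    have h := inv_eq_of_mul_eq_one_right hr1
    calc c*a*b*a = (c*a*b*a)⁻¹ := by rw [h]
      _ = a*b*a*c := by simp [mul_inv_rev, ainv, binv, cinv, mul_assoc]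
  -- tail lemmas for the Coxeter generators t1 = b*a*b, t2 = b, t3 = c, t4 = f
  have hab' : ∀ x : Q, a*(b*(a*x)) = b*(a*(b*x)) := fun x => by
    simp only [← mul_assoc]; rw [hab]
  have haf' : ∀ x : Q, a*(f*x) = f*(a*x) := fun x => by
    rw [← mul_assoc, haf, mul_assoc]
  have hbf' : ∀ x : Q, b*(f*x) = f*(b*x) := fun x => by
    rw [← mul_assoc, hbf, mul_assoc]
  have hcaba' : ∀ x : Q, c*(a*(b*(a*x))) = a*(b*(a*(c*x))) := fun x => by
    simp only [← mul_assoc]; rw [hcomm]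
  have q1' : ∀ x : Q, (b*a*b)*((b*a*b)*x) = x := fun x => by
    simp only [mul_assoc, ta, tb]
  have b12' : ∀ x : Q, (b*a*b)*(b*((b*a*b)*x)) = b*((b*a*b)*(b*x)) := fun x => by
    simp only [mul_assoc, ta, tb]
    rw [hab']
    simp only [tb]
  have b23' : ∀ x : Q, b*(c*(b*x)) = c*(b*(c*x)) := fun x => by
    simp only [← mul_assoc]; rw [hbc]
  have b34' : ∀ x : Q, c*(f*(c*x)) = f*(c*(f*x)) := fun x => by
    simp only [← mul_assoc]; rw [hfc]
  have c13' : ∀ x : Q, (b*a*b)*(c*x) = c*((b*a*b)*x) := fun x => by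
    simp only [mul_assoc]
    rw [← hab', ← hcaba', hab']
  have c14' : ∀ x : Q, (b*a*b)*(f*x) = f*((b*a*b)*x) := fun x => by
    simp only [mul_assoc, hbf', haf']
  -- normal-form membership preservation
  have M1 : ∀ x ∈ NF4 (b*a*b) b c f, (b*a*b) * x ∈ NF4 (b*a*b) b c f :=
    nf4_mul1 q1' c13' c14'
  have M2 : ∀ x ∈ NF4 (b*a*b) b c f, b * x ∈ NF4 (b*a*b) b c f :=
    nf4_mul2 q1' tb b12' c13' c14' hbf'
  have M3 : ∀ x ∈ NF4 (b*a*b) b c f, c * x ∈ NF4 (b*a*b) b c f :=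
    nf4_mul3 q1' tb tc b12' b23' c13' c14' hbf'
  have M4 : ∀ x ∈ NF4 (b*a*b) b c f, f * x ∈ NF4 (b*a*b) b c f :=
    nf4_mul4 q1' tb tc tf b12' b23' b34' c13' c14' hbf'
  have ea : ∀ y : Q, a*y = b*((b*a*b)*(b*y)) := fun y => by
    simp only [mul_assoc, ta, tb]
  have main : ∀ x : Q, x ∈ NF4 (b*a*b) b c f := by
    intro x
    refine Subgroup.closure_induction_left (p := fun y _ => y ∈ NF4 (b*a*b) b c f)
      nf4_one ?_ ?_ (gen x)
    · intro s hs y _ ih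
      simp only [Set.mem_insert_iff, Set.mem_singleton_iff] at hs
      rcases hs with h|h|h|h|h <;> rw [h]
      · rw [ea]; exact M2 _ (M1 _ (M2 _ ih))
      · exact M2 _ ih
      · exact M3 _ ih
      · rw [← hcd]; exact M3 _ ih
      · exact M4 _ ih
    · intro s hs y _ ih
      simp only [Set.mem_insert_iff, Set.mem_singleton_iff] at hs
      rcases hs with h|h|h|h|h <;> rw [h]
      · rw [ainv, ea]; exact M2 _ (M1 _ (M2 _ ih))
      · rw [binv]; exact M2 _ ih
      · rw [cinv]; exact M3 _ ih
      · rw [dinv, ← hcd]; exact M3 _ ih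
      · rw [finv]; exact M4 _ ih
  intro x hx
  obtain ⟨u, hu, y, ⟨v, hv, y2, ⟨w, hw, z, hz, rfl⟩, rfl⟩, rfl⟩ := main x
  simp only [NF1, Set.mem_insert_iff, Set.mem_singleton_iff] at hu hv hw hz
  rcases hu with h1|h1|h1|h1|h1 <;> rcases hv with h2|h2|h2|h2 <;>
    rcases hw with h3|h3|h3 <;> rcases hz with h4|h4 <;>
    rw [h1, h2, h3, h4] at hx ⊢ <;>
    first
      | (simp only [map_mul, map_one, pa, pb, pc, pf] at hx; exact absurd hx (by decide))
      | simp

end Stmt2aux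



namespace Stmt2

/-- Generators: `0 ↦ g1`, `1 ↦ g2`, `2 ↦ g3`, `3 ↦ g3'`, `4 ↦ g4`. -/
def g (i : Fin 5) : FreeGroup (Fin 5) := FreeGroup.of i

/-- The braid relator `x y x (y x y)⁻¹`, i.e. `<x,y> = e`. -/
def braid (x y : FreeGroup (Fin 5)) : FreeGroup (Fin 5) := x * y * x * (y * x * y)⁻¹

/-- The commutator relator `x y x⁻¹ y⁻¹`, i.e. `[x,y] = e`. -/
def comm (x y : FreeGroup (Fin 5)) : FreeGroup (Fin 5) := x * y * x⁻¹ * y⁻¹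

/-- Relators of the group `G_V` from Theorem 3.3 (union of the Veronese surface `V₂`
and a plane).  Here `g 0 = g1`, `g 1 = g2`, `g 2 = g3`, `g 3 = g3'`, `g 4 = g4`. -/
def rels : Set (FreeGroup (Fin 5)) :=
  { (g 0) ^ 2, (g 1) ^ 2, (g 2) ^ 2, (g 3) ^ 2, (g 4) ^ 2,
    braid (g 0) (g 1),
    braid (g 1) ((g 2)⁻¹ * (g 3)⁻¹ * g 0 * g 3 * g 2),
    braid (g 1) (g 3 * g 2 * g 0 * (g 2)⁻¹ * (g 3)⁻¹),
    braid (g 1) (g 3),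
    braid (g 1) (g 3 * g 2 * (g 3)⁻¹),
    braid (g 1) (g 3 * g 2 * g 3 * (g 2)⁻¹ * (g 3)⁻¹),
    braid (g 0) (g 3),
    braid (g 0) (g 3 * g 2 * (g 3)⁻¹),
    braid (g 0) (g 3 * g 2 * g 3 * (g 2)⁻¹ * (g 3)⁻¹),
    braid (g 4) (g 3),
    braid (g 4) (g 3 * g 2 * (g 3)⁻¹),
    braid (g 4) (g 3 * g 2 * g 3 * (g 2)⁻¹ * (g 3)⁻¹),
    comm (g 0) (g 4), comm (g 1) (g 4), comm (g 3 * g 2) (g 4),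
    (g 1 * (g 2)⁻¹ * (g 3)⁻¹ * g 0 * g 3 * g 2 * g 0 * g 1 * (g 0)⁻¹ * (g 2)⁻¹ * (g 3)⁻¹
        * (g 0)⁻¹ * g 3 * g 2 * (g 1)⁻¹)
      * ((g 2)⁻¹ * (g 3)⁻¹ * g 1 * g 3 * g 2)⁻¹,
    (g 4) ^ 2 * g 1 * g 3 * g 2 * g 1 * (g 2)⁻¹ * (g 3)⁻¹ * g 0 * g 3 * g 2 * g 0 }

/-- The presented group `G_V`. -/
abbrev GV := PresentedGroup rels

/-- Theorem 3.3 (kernel description): for the homomorphism `φ : G_V → S₅` determined by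
`g1 ↦ (1 3)`, `g2 ↦ (2 3)`, `g3 ↦ (3 4)`, `g3' ↦ (3 4)`, `g4 ↦ (4 5)`, the kernel of `φ`
is the normal closure of `(g3 g1 g2 g1)²` and `(g3' g1 g2 g1)²`. -/
theorem ker_eq_normalClosure (φ : GV →* Equiv.Perm (Fin 5))
    (h1 : φ (PresentedGroup.of 0) = Equiv.swap 0 2)
    (h2 : φ (PresentedGroup.of 1) = Equiv.swap 1 2)
    (h3 : φ (PresentedGroup.of 2) = Equiv.swap 2 3)
    (h3' : φ (PresentedGroup.of 3) = Equiv.swap 2 3)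
    (h4 : φ (PresentedGroup.of 4) = Equiv.swap 3 4) :
    MonoidHom.ker φ = Subgroup.normalClosure
      { (PresentedGroup.of 2 * PresentedGroup.of 0 * PresentedGroup.of 1
          * PresentedGroup.of 0 : GV) ^ 2,
        (PresentedGroup.of 3 * PresentedGroup.of 0 * PresentedGroup.of 1
          * PresentedGroup.of 0 : GV) ^ 2 } := by
  classical
  set N : Subgroup GV := Subgroup.normalClosure
      { (PresentedGroup.of 2 * PresentedGroup.of 0 * PresentedGroup.of 1
          * PresentedGroup.of 0 : GV) ^ 2,
        (PresentedGroup.of 3 * PresentedGroup.of 0 * PresentedGroup.of 1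
          * PresentedGroup.of 0 : GV) ^ 2 } with hNdef
  -- easy inclusion: N ≤ ker φ
  have hNle : N ≤ MonoidHom.ker φ := by
    rw [hNdef]
    refine Subgroup.normalClosure_le_normal ?_
    rintro r (rfl | rfl) <;>
      simp only [SetLike.mem_coe, MonoidHom.mem_ker, map_pow, map_mul,
        h1, h2, h3, h3'] <;> decide
  -- the quotient by N and the induced map
  have hNker : ∀ x ∈ N, φ x = 1 := fun x hx => MonoidHom.mem_ker.mp (hNle hx)
  set π : GV →* GV ⧸ N := QuotientGroup.mk' N with hπdef
  set φQ : GV ⧸ N →* Equiv.Perm (Fin 5) := QuotientGroup.lift N φ hNker with hφQdef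
  -- relators of GV
  have hrels : ∀ r ∈ rels, PresentedGroup.mk rels r = 1 := fun r hr =>
    (QuotientGroup.eq_one_iff r).mpr (Subgroup.subset_normalClosure hr)
  have E0 : (PresentedGroup.of 0 : GV) * PresentedGroup.of 0 = 1 := by
    have h := hrels ((g 0)^2) (by
      unfold rels; repeat first | exact Set.mem_insert _ _ | apply Set.mem_insert_of_mem)
    rw [map_pow, pow_two] at h; exact h
  have E1 : (PresentedGroup.of 1 : GV) * PresentedGroup.of 1 = 1 := by
    have h := hrels ((g 1)^2) (by
      unfold rels; repeat first | exact Set.mem_insert _ _ | apply Set.mem_insert_of_mem)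
    rw [map_pow, pow_two] at h; exact h
  have E2 : (PresentedGroup.of 2 : GV) * PresentedGroup.of 2 = 1 := by
    have h := hrels ((g 2)^2) (by
      unfold rels; repeat first | exact Set.mem_insert _ _ | apply Set.mem_insert_of_mem)
    rw [map_pow, pow_two] at h; exact h
  have E3 : (PresentedGroup.of 3 : GV) * PresentedGroup.of 3 = 1 := by
    have h := hrels ((g 3)^2) (by
      unfold rels; repeat first | exact Set.mem_insert _ _ | apply Set.mem_insert_of_mem)
    rw [map_pow, pow_two] at h; exact h
  have E4 : (PresentedGroup.of 4 : GV) * PresentedGroup.of 4 = 1 := by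
    have h := hrels ((g 4)^2) (by
      unfold rels; repeat first | exact Set.mem_insert _ _ | apply Set.mem_insert_of_mem)
    rw [map_pow, pow_two] at h; exact h
  have Eab : (PresentedGroup.of 0 : GV) * PresentedGroup.of 1 * PresentedGroup.of 0
      = PresentedGroup.of 1 * PresentedGroup.of 0 * PresentedGroup.of 1 := by
    have h := hrels (braid (g 0) (g 1)) (by
      unfold rels; repeat first | exact Set.mem_insert _ _ | apply Set.mem_insert_of_mem)
    simp only [braid, map_mul, map_inv] at h
    rw [mul_inv_eq_one] at h; exact h
  have Ebd : (PresentedGroup.of 1 : GV) * PresentedGroup.of 3 * PresentedGroup.of 1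
      = PresentedGroup.of 3 * PresentedGroup.of 1 * PresentedGroup.of 3 := by
    have h := hrels (braid (g 1) (g 3)) (by
      unfold rels; repeat first | exact Set.mem_insert _ _ | apply Set.mem_insert_of_mem)
    simp only [braid, map_mul, map_inv] at h
    rw [mul_inv_eq_one] at h; exact h
  have Efd : (PresentedGroup.of 4 : GV) * PresentedGroup.of 3 * PresentedGroup.of 4
      = PresentedGroup.of 3 * PresentedGroup.of 4 * PresentedGroup.of 3 := by
    have h := hrels (braid (g 4) (g 3)) (by
      unfold rels; repeat first | exact Set.mem_insert _ _ | apply Set.mem_insert_of_mem)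
    simp only [braid, map_mul, map_inv] at h
    rw [mul_inv_eq_one] at h; exact h
  have EfX : (PresentedGroup.of 4 : GV)
        * (PresentedGroup.of 3 * PresentedGroup.of 2 * (PresentedGroup.of 3)⁻¹)
        * PresentedGroup.of 4
      = (PresentedGroup.of 3 * PresentedGroup.of 2 * (PresentedGroup.of 3)⁻¹)
        * PresentedGroup.of 4
        * (PresentedGroup.of 3 * PresentedGroup.of 2 * (PresentedGroup.of 3)⁻¹) := by
    have h := hrels (braid (g 4) (g 3 * g 2 * (g 3)⁻¹)) (by
      unfold rels; repeat first | exact Set.mem_insert _ _ | apply Set.mem_insert_of_mem)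
    simp only [braid, map_mul, map_inv] at h
    rw [mul_inv_eq_one] at h; exact h
  have Ecf : (PresentedGroup.of 3 : GV) * PresentedGroup.of 2 * PresentedGroup.of 4
      = PresentedGroup.of 4 * (PresentedGroup.of 3 * PresentedGroup.of 2) := by
    have h := hrels (comm (g 3 * g 2) (g 4)) (by
      unfold rels; repeat first | exact Set.mem_insert _ _ | apply Set.mem_insert_of_mem)
    simp only [comm, map_mul, map_inv] at h
    rw [mul_inv_eq_one, mul_inv_eq_iff_eq_mul] at h; exact h
  have Eaf : (PresentedGroup.of 0 : GV) * PresentedGroup.of 4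
      = PresentedGroup.of 4 * PresentedGroup.of 0 := by
    have h := hrels (comm (g 0) (g 4)) (by
      unfold rels; repeat first | exact Set.mem_insert _ _ | apply Set.mem_insert_of_mem)
    simp only [comm, map_mul, map_inv] at h
    rw [mul_inv_eq_one, mul_inv_eq_iff_eq_mul] at h; exact h
  have Ebf : (PresentedGroup.of 1 : GV) * PresentedGroup.of 4
      = PresentedGroup.of 4 * PresentedGroup.of 1 := by
    have h := hrels (comm (g 1) (g 4)) (by
      unfold rels; repeat first | exact Set.mem_insert _ _ | apply Set.mem_insert_of_mem)
    simp only [comm, map_mul, map_inv] at h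
    rw [mul_inv_eq_one, mul_inv_eq_iff_eq_mul] at h; exact h
  -- push everything to the quotient
  have qa : π (PresentedGroup.of 0) * π (PresentedGroup.of 0) = 1 := by
    rw [← map_mul, E0, map_one]
  have qb : π (PresentedGroup.of 1) * π (PresentedGroup.of 1) = 1 := by
    rw [← map_mul, E1, map_one]
  have qc : π (PresentedGroup.of 2) * π (PresentedGroup.of 2) = 1 := by
    rw [← map_mul, E2, map_one]
  have qd : π (PresentedGroup.of 3) * π (PresentedGroup.of 3) = 1 := by
    rw [← map_mul, E3, map_one]
  have qf : π (PresentedGroup.of 4) * π (PresentedGroup.of 4) = 1 := by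
    rw [← map_mul, E4, map_one]
  have dinvQ : (π (PresentedGroup.of 3))⁻¹ = π (PresentedGroup.of 3) :=
    inv_eq_of_mul_eq_one_right qd
  have hab := congrArg π Eab
  simp only [map_mul] at hab
  have hbd := congrArg π Ebd
  simp only [map_mul] at hbd
  have hfd := congrArg π Efd
  simp only [map_mul] at hfd
  have hfX := congrArg π EfX
  simp only [map_mul, map_inv, dinvQ] at hfX
  have hcf := congrArg π Ecf
  simp only [map_mul] at hcf
  have haf := congrArg π Eaf
  simp only [map_mul] at haf
  have hbf := congrArg π Ebf
  simp only [map_mul] at hbf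
  have hr1Q : (π (PresentedGroup.of 2) * π (PresentedGroup.of 0) * π (PresentedGroup.of 1)
        * π (PresentedGroup.of 0))
      * (π (PresentedGroup.of 2) * π (PresentedGroup.of 0) * π (PresentedGroup.of 1)
        * π (PresentedGroup.of 0)) = 1 := by
    have h : π ((PresentedGroup.of 2 * PresentedGroup.of 0 * PresentedGroup.of 1
        * PresentedGroup.of 0 : GV) ^ 2) = 1 := (QuotientGroup.eq_one_iff _).mpr
      (Subgroup.subset_normalClosure (Set.mem_insert _ _))
    simp only [map_pow, map_mul] at h
    rw [pow_two] at h
    exact h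
  -- images of the generators
  have pa : φQ (π (PresentedGroup.of 0)) = Equiv.swap 0 2 := h1
  have pb : φQ (π (PresentedGroup.of 1)) = Equiv.swap 1 2 := h2
  have pc : φQ (π (PresentedGroup.of 2)) = Equiv.swap 2 3 := h3
  have pf : φQ (π (PresentedGroup.of 4)) = Equiv.swap 3 4 := h4
  -- the quotient is generated by the images of the generators
  have gen : ∀ x : GV ⧸ N, x ∈ Subgroup.closure
      ({π (PresentedGroup.of 0), π (PresentedGroup.of 1), π (PresentedGroup.of 2),
        π (PresentedGroup.of 3), π (PresentedGroup.of 4)} : Set (GV ⧸ N)) := by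
    intro x
    obtain ⟨y, rfl⟩ := QuotientGroup.mk'_surjective N x
    have hy := PresentedGroup.generated_by rels
      (Subgroup.comap π (Subgroup.closure
        ({π (PresentedGroup.of 0), π (PresentedGroup.of 1), π (PresentedGroup.of 2),
          π (PresentedGroup.of 3), π (PresentedGroup.of 4)} : Set (GV ⧸ N))))
      (fun j => Subgroup.mem_comap.mpr (Subgroup.subset_closure (by
        fin_cases j <;> simp)))
      y
    exact Subgroup.mem_comap.mp hy
  -- injectivity of the induced map
  have KEY := Stmt2aux.key φQ (π (PresentedGroup.of 0)) (π (PresentedGroup.of 1))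
    (π (PresentedGroup.of 2)) (π (PresentedGroup.of 3)) (π (PresentedGroup.of 4))
    qa qb qc qd qf hab hbd hfd hfX hcf haf hbf hr1Q pa pb pc pf gen
  -- conclude
  ext x
  simp only [MonoidHom.mem_ker]
  constructor
  · intro hx
    have hx' : φQ (π x) = 1 := hx
    have := KEY (π x) hx'
    exact (QuotientGroup.eq_one_iff x).mp this
  · intro hx
    have h : π x = 1 := (QuotientGroup.eq_one_iff x).mpr hx
    have h2 : φQ (π x) = 1 := by rw [h, map_one]
    exact h2

end Stmt2
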